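/- Let M = (S²×S²) \ {(u,v) : u₃ = 0 and v₃ ≥ 0} with the subspace topology, let h : [−1,1] → ℝ be continuous with h ≥ 0 and h(z) = 0 if and only if z ≥ 0, and define F̃ : M → ℝ² by F̃(u,v) = (u₃, (v₃+2)/(u₃²+h(v₃))). Then F̃ is a proper map. -/
import Mathlib


open Set

noncomputable section

/-- The unit sphere in `ℝ³`. -/
def S2 : Set (EuclideanSpace ℝ (Fin 3)) := {u | ‖u‖ = 1}

/-- `M = (S²×S²) \ {(u,v) : u₃ = 0 and v₃ ≥ 0}`. -/
def Msp : Set (EuclideanSpace ℝ (Fin 3) × EuclideanSpace ℝ (Fin 3)) :=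
  (S2 ×ˢ S2) \ {p | p.1 2 = 0 ∧ 0 ≤ p.2 2}

lemma coord_mem_Icc {u : EuclideanSpace ℝ (Fin 3)} (hu : u ∈ S2) : u 2 ∈ Icc (-1 : ℝ) 1 := by
  have h1 : ‖u‖ = 1 := hu
  have h2 : ‖u‖ ^ 2 = ∑ i, ‖u i‖ ^ 2 := by
    rw [EuclideanSpace.norm_eq, Real.sq_sqrt (by positivity)]
  rw [h1] at h2
  simp only [Fin.sum_univ_three, Real.norm_eq_abs, sq_abs] at h2
  constructor <;> nlinarith [sq_nonneg (u 0), sq_nonneg (u 1)]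

lemma S2_compact : IsCompact S2 := by
  have : S2 = Metric.sphere (0 : EuclideanSpace ℝ (Fin 3)) 1 := by
    ext u; simp [S2, Metric.mem_sphere, dist_zero_right]
  rw [this]; exact isCompact_sphere 0 1

/-- Let `h : [−1,1] → ℝ` be continuous with `h ≥ 0` and `h(z) = 0 ↔ z ≥ 0`. Then the
map `F̃(u,v) = (u₃, (v₃+2)/(u₃²+h(v₃)))` on `M` is proper. -/
theorem Ftilde_proper (h : ℝ → ℝ)
    (hcont : ContinuousOn h (Icc (-1 : ℝ) 1))
    (hnn : ∀ z ∈ Icc (-1 : ℝ) 1, 0 ≤ h z)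
    (hzero : ∀ z ∈ Icc (-1 : ℝ) 1, (h z = 0 ↔ 0 ≤ z)) :
    IsProperMap (Msp.restrict fun p => (p.1 2, (p.2 2 + 2) / ((p.1 2) ^ 2 + h (p.2 2)))) := by
  set E := EuclideanSpace ℝ (Fin 3)
  set F : E × E → ℝ × ℝ :=
    fun p => (p.1 2, (p.2 2 + 2) / ((p.1 2) ^ 2 + h (p.2 2))) with hFdef
  set g : E × E → ℝ := fun p => (p.1 2) ^ 2 + h (p.2 2) with hgdef
  -- denominator positive on Msp
  have hden : ∀ p ∈ Msp, 0 < g p := by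
    intro p hp
    obtain ⟨⟨hu, hv⟩, hnot⟩ := hp
    have hv2 := coord_mem_Icc hv
    rcases eq_or_ne (p.1 2) 0 with h0 | h0
    · have hle : ¬ 0 ≤ p.2 2 := fun hle => hnot ⟨h0, hle⟩
      have hne : h (p.2 2) ≠ 0 := fun he => hle ((hzero _ hv2).1 he)
      have := hnn _ hv2
      have hpos : 0 < h (p.2 2) := lt_of_le_of_ne this (Ne.symm hne)
      simp only [hgdef, h0]
      nlinarith
    · have := hnn _ hv2
      have : 0 < (p.1 2) ^ 2 := by positivity
      simp only [hgdef]
      nlinarith [hnn _ hv2]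
  -- coordinate functions are continuous
  have hc1 : Continuous fun p : E × E => p.1 2 :=
    (EuclideanSpace.proj (2 : Fin 3)).continuous.comp continuous_fst
  have hc2 : Continuous fun p : E × E => p.2 2 :=
    (EuclideanSpace.proj (2 : Fin 3)).continuous.comp continuous_snd
  have hgc : ContinuousOn g (S2 ×ˢ S2) := by
    apply ((hc1.pow 2).continuousOn).add
    exact hcont.comp hc2.continuousOn fun p hp => coord_mem_Icc hp.2
  have hMsub : Msp ⊆ S2 ×ˢ S2 := diff_subset
  have hFM : ContinuousOn F Msp := by
    apply ContinuousOn.prodMk hc1.continuousOn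
    exact ((hc2.add continuous_const).continuousOn).div (hgc.mono hMsub)
      fun p hp => (hden p hp).ne'
  rw [isProperMap_iff_isCompact_preimage]
  refine ⟨hFM.restrict, fun K hK => ?_⟩
  -- bound the second coordinate on K
  obtain ⟨C, hC⟩ := (hK.image continuous_snd).bddAbove
  set C' : ℝ := max C 1 with hC'def
  have hC'1 : (1 : ℝ) ≤ C' := le_max_right _ _
  have hC'pos : (0 : ℝ) < C' := by linarith
  set A : Set (E × E) := (S2 ×ˢ S2) ∩ g ⁻¹' Ici (1 / C') with hAdef
  have hAclosed : IsClosed A :=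
    hgc.preimage_isClosed_of_isClosed
      ((S2_compact.isClosed).prod S2_compact.isClosed) isClosed_Ici
  have hAcomp : IsCompact A :=
    (S2_compact.prod S2_compact).of_isClosed_subset hAclosed inter_subset_left
  have hAM : A ⊆ Msp := by
    rintro p ⟨hps, hpg⟩
    refine ⟨hps, ?_⟩
    rintro ⟨h0, hge⟩
    have hz : h (p.2 2) = 0 := (hzero _ (coord_mem_Icc hps.2)).2 hge
    have hg0 : g p = 0 := by simp [hgdef, h0, hz]
    have : (0 : ℝ) < 1 / C' := by positivity
    have hpg' : 1 / C' ≤ g p := hpg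
    linarith [hg0 ▸ hpg']
  set s : Set (E × E) := A ∩ F ⁻¹' K with hsdef
  have hsclosed : IsClosed s :=
    (hFM.mono hAM).preimage_isClosed_of_isClosed hAclosed hK.isClosed
  have hscomp : IsCompact s := hAcomp.of_isClosed_subset hsclosed inter_subset_left
  have hpre : (Msp.restrict F) ⁻¹' K = Subtype.val ⁻¹' s := by
    ext x
    simp only [mem_preimage, restrict_apply, hsdef, mem_inter_iff]
    constructor
    · intro hx
      refine ⟨⟨hMsub x.2, ?_⟩, hx⟩
      have hd : 0 < g x.val := hden _ x.2
      have hsnd : (F x.val).2 ≤ C := hC ⟨F x.val, hx, rfl⟩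
      have hsnd' : (x.val.2 2 + 2) / g x.val ≤ C' := le_trans hsnd (le_max_left _ _)
      have hv : -1 ≤ x.val.2 2 := (coord_mem_Icc x.2.1.2).1
      rw [div_le_iff₀ hd] at hsnd'
      simp only [mem_preimage, mem_Ici]
      rw [div_le_iff₀ hC'pos]
      nlinarith
    · intro hx
      exact hx.2
  rw [hpre, Subtype.isCompact_iff, Subtype.image_preimage_coe]
  have hMs : Msp ∩ s = s := inter_eq_self_of_subset_right fun x hx => hAM hx.1
  rw [hMs]
  exact hscomp
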